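/- Let x₁,…,xₙ be arbitrary points in ℝ^d, let D be the n×n matrix with D_ij = ‖x_i − x_j‖ (Euclidean distance), let J = Iₙ − (1/n)·𝟏ₙ𝟏ₙᵀ, and let S = −(1/2)·J (D ∘ D) J, where D ∘ D is the entrywise square of D. Then S is a symmetric positive semidefinite matrix. -/

import Mathlib

open Matrix


/-- The doubly centered matrix of (negative half) squared Euclidean distances of any
finite point configuration is symmetric positive semidefinite. -/
theorem stmt_8 (n d : ℕ) (hn : 0 < n) (x : Fin n → EuclideanSpace ℝ (Fin d))
    (D : Matrix (Fin n) (Fin n) ℝ) (hD : ∀ i j, D i j = dist (x i) (x j))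
    (J S : Matrix (Fin n) (Fin n) ℝ)
    (hJ : J = (1 : Matrix (Fin n) (Fin n) ℝ) - (n : ℝ)⁻¹ • Matrix.of (fun _ _ => (1 : ℝ)))
    (hS : S = (-(1 / 2 : ℝ)) • (J * Matrix.of (fun i j => D i j ^ 2) * J)) :
    S.IsSymm ∧ S.PosSemidef := by
  -- the data matrix
  set X : Matrix (Fin d) (Fin n) ℝ := Matrix.of (fun k i => x i k) with hX
  -- Gram matrix
  set G : Matrix (Fin n) (Fin n) ℝ := Xᵀ * X with hG
  have hGapp : ∀ i j, G i j = inner ℝ (x i) (x j) := by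
    intro i j
    simp [hG, Matrix.mul_apply, Matrix.transpose_apply, hX,
      PiLp.inner_apply, RCLike.inner_apply, starRingEnd_apply, mul_comm]
  -- J is symmetric
  have hJsymm : Jᵀ = J := by
    rw [hJ]; ext i j
    simp [Matrix.transpose_apply, Matrix.one_apply]
    exact if_congr eq_comm rfl rfl
  -- row and column sums of J vanish
  have hJrow : ∀ i, ∑ k, J i k = 0 := by
    intro i
    rw [hJ]
    simp [Matrix.one_apply, Finset.sum_sub_distrib, Finset.sum_ite_eq]
    field_simp
    norm_num
  have hJcol : ∀ j, ∑ k, J k j = 0 := by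
    intro j
    calc ∑ k, J k j = ∑ k, J j k := by
          refine Finset.sum_congr rfl fun k _ => ?_
          have := congrFun (congrFun hJsymm j) k
          simpa [Matrix.transpose_apply] using this
      _ = 0 := hJrow j
  -- squared distance decomposition
  have hM : Matrix.of (fun i j => D i j ^ 2) =
      Matrix.of (fun i j => ‖x i‖ ^ 2) + Matrix.of (fun i j => ‖x j‖ ^ 2) - (2 : ℝ) • G := by
    ext i j
    simp only [Matrix.sub_apply, Matrix.add_apply, Matrix.smul_apply, Matrix.of_apply,
      smul_eq_mul, hD, dist_eq_norm, hGapp]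
    rw [@norm_sub_sq_real]
    ring
  -- the left-constant-column matrix killed on the right
  have hC : Matrix.of (fun i j => ‖x i‖ ^ 2) * J = 0 := by
    ext i j
    simp only [Matrix.mul_apply, Matrix.of_apply, Matrix.zero_apply]
    rw [← Finset.mul_sum, hJcol, mul_zero]
  have hR : J * Matrix.of (fun i j => ‖x j‖ ^ 2) = 0 := by
    ext i j
    simp only [Matrix.mul_apply, Matrix.of_apply, Matrix.zero_apply]
    rw [← Finset.sum_mul, hJrow, zero_mul]
  -- key identity
  have hSkey : S = (X * J)ᵀ * (X * J) := by
    rw [hS, hM]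
    rw [Matrix.mul_sub, Matrix.mul_add, Matrix.sub_mul, Matrix.add_mul]
    rw [hR, Matrix.zero_mul, Matrix.mul_assoc J (Matrix.of fun i j => ‖x i‖ ^ 2) J, hC,
      Matrix.mul_zero]
    rw [Matrix.mul_smul, Matrix.smul_mul]
    have : (X * J)ᵀ * (X * J) = Jᵀ * G * J := by
      rw [Matrix.transpose_mul, hG, Matrix.mul_assoc, Matrix.mul_assoc, Matrix.mul_assoc]
    rw [this, hJsymm]
    simp only [zero_add, zero_sub, smul_neg, neg_neg, smul_smul]
    norm_num
  have hPSD : S.PosSemidef := by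
    rw [hSkey]
    have := Matrix.posSemidef_conjTranspose_mul_self (X * J)
    rw [Matrix.conjTranspose_eq_transpose_of_trivial] at this
    simpa [Matrix.conjTranspose, Matrix.transpose] using this
  refine ⟨?_, hPSD⟩
  have := hPSD.1
  rw [Matrix.IsHermitian] at this
  rw [Matrix.IsSymm]
  simpa using this
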